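/- Assume neutral competition α = β = 1, no treatment D ≡ 0, and equal death-to-growth ratios d_S/r_S = d_R/r_R = δ with 0 < δ < 1. Let (S,R) be a solution on [0, ∞) with S(0) > 0, R(0) > 0 and N(0) < K(1 − δ). Then N(t) is strictly increasing and N(t) → K(1 − δ) as t → ∞; that is, the trajectory converges to the line of coexistence equilibria S + R = K(1 − δ). -/

import Mathlib

open Set Filter

/-- If `y' = h·y` on `[0,∞)` with `h` continuous there and `y 0 > 0`, then `y > 0` on `[0,∞)`. -/
lemma pos_of_linear_ode (y h : ℝ → ℝ)
    (hcont : ∀ t ∈ Set.Ici (0:ℝ), ContinuousAt h t)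
    (hderiv : ∀ t ∈ Set.Ici (0:ℝ), HasDerivAt y (h t * y t) t)
    (hy0 : 0 < y 0) : ∀ t ∈ Set.Ici (0:ℝ), 0 < y t := by
  intro t0 ht0
  by_contra hle
  push_neg at hle
  -- find a zero of y in [0, t0]
  have hycont : ∀ s ∈ Set.Ici (0:ℝ), ContinuousAt y s := fun s hs =>
    (hderiv s hs).continuousAt
  have hIVT : (0:ℝ) ∈ y '' Set.Icc 0 t0 := by
    apply intermediate_value_Icc' ht0 (fun s hs => (hycont s hs.1).continuousWithinAt)
    exact ⟨hle, hy0.le⟩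
  obtain ⟨t1, ht1, hyt1⟩ := hIVT
  have ht1pos : 0 < t1 := by
    rcases eq_or_lt_of_le ht1.1 with h | h
    · exact absurd hyt1 (by rw [← h]; exact hy0.ne')
    · exact h
  -- bound h on [0, t1]
  have hsub : Set.Icc (0:ℝ) t1 ⊆ Set.Ici 0 := fun s hs => hs.1
  obtain ⟨C, hC⟩ := (isCompact_Icc (a := (0:ℝ)) (b := t1)).exists_bound_of_continuousOn
    (fun s hs => (hcont s (hsub hs)).continuousWithinAt)
  -- reversed function
  set v : ℝ → ℝ := fun s => y (t1 - s) with hv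
  have hmem : ∀ s ∈ Set.Icc (0:ℝ) t1, t1 - s ∈ Set.Icc (0:ℝ) t1 := by
    intro s hs; constructor <;> [linarith [hs.2]; linarith [hs.1]]
  have hvderiv : ∀ s ∈ Set.Ico (0:ℝ) t1,
      HasDerivWithinAt v (-(h (t1 - s) * y (t1 - s))) (Set.Ici s) s := by
    intro s hs
    have h1 : HasDerivAt (fun s : ℝ => t1 - s) (-1) s := by
      simpa using (hasDerivAt_id s).const_sub t1
    have h2 : t1 - s ∈ Set.Ici (0:ℝ) := by simp [Set.mem_Ici]; linarith [hs.2]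
    have := (hderiv (t1 - s) h2).comp s h1
    exact this.hasDerivWithinAt.congr_deriv (by ring)
  have hvcont : ContinuousOn v (Set.Icc 0 t1) := by
    intro s hs
    exact ((hycont (t1 - s) (hmem s hs).1).comp
      (continuousAt_const.sub continuousAt_id)).continuousWithinAt
  have key := norm_le_gronwallBound_of_norm_deriv_right_le (δ := 0) (K := C) (ε := 0)
    hvcont hvderiv (by simp [hv, hyt1]) ?_ t1 (by constructor <;> linarith)
  · rw [gronwallBound_ε0_δ0] at key
    have : y 0 = 0 := by
      have : ‖y 0‖ ≤ 0 := by simpa [hv] using key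
      simpa using le_antisymm this (norm_nonneg _)
    exact hy0.ne' this
  · intro s hs
    have h2 : t1 - s ∈ Set.Icc (0:ℝ) t1 := hmem s ⟨hs.1, hs.2.le⟩
    have := hC (t1 - s) h2
    calc ‖-(h (t1-s) * y (t1-s))‖ = ‖h (t1-s)‖ * ‖y (t1-s)‖ := by
          rw [norm_neg, norm_mul]
      _ ≤ C * ‖v s‖ + 0 := by
          simp only [add_zero, hv]
          exact mul_le_mul_of_nonneg_right this (norm_nonneg _)

/-- under neutral competition `α = β = 1`, no treatment `D ≡ 0`, and
equal death-to-growth ratios `d_S/r_S = d_R/r_R = δ ∈ (0,1)`, for every solution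
on `[0,∞)` with `S(0) > 0`, `R(0) > 0` and `N(0) < K(1-δ)`, the total burden
`N = S + R` is strictly increasing on `[0,∞)` and `N(t) → K(1-δ)` as `t → ∞`,
i.e. the trajectory converges to the line of coexistence equilibria. -/
theorem stmt_11 (K rS rR dS dR δ : ℝ) (S R : ℝ → ℝ)
    (hK : 0 < K) (hrS : 0 < rS) (hrR : 0 < rR)
    (hδ0 : 0 < δ) (hδ1 : δ < 1)
    (hdS : dS = δ * rS) (hdR : dR = δ * rR)
    (hSode : ∀ t ∈ Set.Ici (0 : ℝ),
      HasDerivAt S (rS * (1 - (S t + R t) / K) * S t - dS * S t) t)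
    (hRode : ∀ t ∈ Set.Ici (0 : ℝ),
      HasDerivAt R (rR * (1 - (S t + R t) / K) * R t - dR * R t) t)
    (hS0 : 0 < S 0) (hR0 : 0 < R 0) (hN0 : S 0 + R 0 < K * (1 - δ)) :
    StrictMonoOn (fun t => S t + R t) (Set.Ici 0) ∧
      Filter.Tendsto (fun t => S t + R t) Filter.atTop (nhds (K * (1 - δ))) := by
  subst hdS hdR
  set N : ℝ → ℝ := fun t => S t + R t with hNdef
  -- continuity facts
  have hScont : ∀ t ∈ Set.Ici (0:ℝ), ContinuousAt S t := fun t ht => (hSode t ht).continuousAt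
  have hRcont : ∀ t ∈ Set.Ici (0:ℝ), ContinuousAt R t := fun t ht => (hRode t ht).continuousAt
  have hNcont : ∀ t ∈ Set.Ici (0:ℝ), ContinuousAt N t := fun t ht =>
    (hScont t ht).add (hRcont t ht)
  -- derivative of N
  have hNode : ∀ t ∈ Set.Ici (0:ℝ),
      HasDerivAt N ((1 - δ - N t / K) * (rS * S t + rR * R t)) t := by
    intro t ht
    have := (hSode t ht).add (hRode t ht)
    exact this.congr_deriv (by simp only [hNdef]; ring)
  -- positivity of S
  have hSpos : ∀ t ∈ Set.Ici (0:ℝ), 0 < S t := by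
    apply pos_of_linear_ode S (fun t => rS * (1 - (S t + R t) / K) - δ * rS)
    · intro t ht
      exact (continuousAt_const.mul (continuousAt_const.sub
        (((hScont t ht).add (hRcont t ht)).div_const K))).sub continuousAt_const
    · intro t ht
      have := hSode t ht
      convert this using 1; ring
    · exact hS0
  -- positivity of R
  have hRpos : ∀ t ∈ Set.Ici (0:ℝ), 0 < R t := by
    apply pos_of_linear_ode R (fun t => rR * (1 - (S t + R t) / K) - δ * rR)
    · intro t ht
      exact (continuousAt_const.mul (continuousAt_const.sub
        (((hScont t ht).add (hRcont t ht)).div_const K))).sub continuousAt_const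
    · intro t ht
      have := hRode t ht
      convert this using 1; ring
    · exact hR0
  -- positivity of M = K(1-δ) - N
  have hMpos : ∀ t ∈ Set.Ici (0:ℝ), 0 < K * (1 - δ) - N t := by
    apply pos_of_linear_ode (fun t => K * (1 - δ) - N t)
      (fun t => -((rS * S t + rR * R t) / K))
    · intro t ht
      exact (((continuousAt_const.mul (hScont t ht)).add
        (continuousAt_const.mul (hRcont t ht))).div_const K).neg
    · intro t ht
      have := (hNode t ht).const_sub (K * (1 - δ))
      exact this.congr_deriv (by beta_reduce; linear_combination ((rS * S t + rR * R t) * (1 - δ)) * mul_inv_cancel₀ hK.ne')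
    · simpa using sub_pos.mpr hN0
  -- the derivative of N is positive on Ici 0
  have hN'pos : ∀ t ∈ Set.Ici (0:ℝ), 0 < (1 - δ - N t / K) * (rS * S t + rR * R t) := by
    intro t ht
    apply mul_pos
    · have := hMpos t ht
      have h1 : N t / K < 1 - δ := by
        rw [div_lt_iff₀ hK]
        nlinarith
      linarith
    · have := hSpos t ht; have := hRpos t ht
      positivity
  -- strict monotonicity
  have hNcontOn : ContinuousOn N (Set.Ici 0) := fun t ht => (hNcont t ht).continuousWithinAt
  have hmono : StrictMonoOn N (Set.Ici 0) := by
    apply strictMonoOn_of_deriv_pos (convex_Ici 0) hNcontOn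
    intro x hx
    rw [interior_Ici] at hx
    rw [(hNode x (show (0:ℝ) ≤ x from le_of_lt hx)).deriv]
    exact hN'pos x (show (0:ℝ) ≤ x from le_of_lt hx)
  refine ⟨hmono, ?_⟩
  -- convergence
  set g : ℝ → ℝ := fun t => N (max t 0) with hgdef
  have hgmono : Monotone g := by
    intro a b hab
    exact hmono.monotoneOn (le_max_right a 0) (le_max_right b 0)
      (max_le_max hab le_rfl)
  have hgbdd : BddAbove (Set.range g) := by
    refine ⟨K * (1 - δ), ?_⟩
    rintro _ ⟨t, rfl⟩
    have := hMpos (max t 0) (le_max_right t 0)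
    simp only [hgdef]
    linarith
  have hgt := tendsto_atTop_ciSup hgmono hgbdd
  set L : ℝ := ⨆ t, g t with hLdef
  have hgN : g =ᶠ[Filter.atTop] N := by
    filter_upwards [Filter.eventually_ge_atTop (0:ℝ)] with t ht
    simp [hgdef, max_eq_left ht]
  have hNt : Filter.Tendsto N Filter.atTop (nhds L) := hgt.congr' hgN
  -- identify the limit
  have hNleL : ∀ t ∈ Set.Ici (0:ℝ), N t ≤ L := by
    intro t ht
    have : g t ≤ L := le_ciSup hgbdd t
    simpa [hgdef, max_eq_left (Set.mem_Ici.mp ht)] using this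
  have hLle : L ≤ K * (1 - δ) := by
    apply ciSup_le
    intro t
    have := hMpos (max t 0) (le_max_right t 0)
    simp only [hgdef]; linarith
  rcases eq_or_lt_of_le hLle with hEq | hLt
  · rwa [hEq] at hNt
  · exfalso
    -- derivative lower bound
    set m := min rS rR with hm
    have hmpos : 0 < m := lt_min hrS hrR
    set c := (1 - δ - L / K) * (m * N 0) with hc
    have hN0pos : 0 < N 0 := add_pos hS0 hR0
    have hεpos : 0 < 1 - δ - L / K := by
      have : L / K < 1 - δ := by rw [div_lt_iff₀ hK]; nlinarith
      linarith
    have hcpos : 0 < c := by positivity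
    have hlow : ∀ t ∈ Set.Ici (0:ℝ), c ≤ (1 - δ - N t / K) * (rS * S t + rR * R t) := by
      intro t ht
      have h1 : N t ≤ L := hNleL t ht
      have hA : 1 - δ - L / K ≤ 1 - δ - N t / K := by
        have : N t / K ≤ L / K := by gcongr
        linarith
      have hNmono : N 0 ≤ N t := hmono.monotoneOn (Set.mem_Ici.mpr le_rfl) ht ht
      have hSp := hSpos t ht
      have hRp := hRpos t ht
      have hB : m * N 0 ≤ rS * S t + rR * R t := by
        have h3 : m ≤ rS := min_le_left _ _
        have h4 : m ≤ rR := min_le_right _ _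
        have h5 : m * N 0 ≤ m * N t := mul_le_mul_of_nonneg_left hNmono hmpos.le
        have h6 : m * N t ≤ rS * S t + rR * R t := by
          simp only [hNdef]
          nlinarith
        linarith
      calc c = (1 - δ - L / K) * (m * N 0) := rfl
        _ ≤ (1 - δ - N t / K) * (rS * S t + rR * R t) :=
            mul_le_mul hA hB (by positivity) (by linarith)
    -- linear growth contradiction
    set φ : ℝ → ℝ := fun t => N t - c * t with hφ
    have hφderiv : ∀ t ∈ Set.Ici (0:ℝ),
        HasDerivAt φ ((1 - δ - N t / K) * (rS * S t + rR * R t) - c) t := by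
      intro t ht
      exact ((hNode t ht).sub ((hasDerivAt_id t).const_mul c)).congr_deriv (by ring)
    have hφmono : MonotoneOn φ (Set.Ici 0) := by
      apply monotoneOn_of_deriv_nonneg (convex_Ici 0)
      · intro t ht
        exact ((hφderiv t ht).continuousAt).continuousWithinAt
      · intro x hx
        rw [interior_Ici] at hx
        exact (hφderiv x (show (0:ℝ) ≤ x from le_of_lt hx)).differentiableAt.differentiableWithinAt
      · intro x hx
        rw [interior_Ici] at hx
        rw [(hφderiv x (show (0:ℝ) ≤ x from le_of_lt hx)).deriv]
        have := hlow x (show (0:ℝ) ≤ x from le_of_lt hx)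
        linarith
    set T : ℝ := (K * (1 - δ) - N 0) / c + 1 with hT
    have hTpos : 0 < T := by
      have h0 : 0 < K * (1 - δ) - N 0 := by
        have := hMpos 0 (Set.mem_Ici.mpr le_rfl); linarith
      have h1 : 0 < (K * (1 - δ) - N 0) / c := div_pos h0 hcpos
      rw [hT]
      linarith
    have hφle : φ 0 ≤ φ T := hφmono (Set.mem_Ici.mpr le_rfl) hTpos.le hTpos.le
    have hNT : K * (1 - δ) < N T := by
      have h1 : N 0 - 0 ≤ N T - c * T := by simpa [hφ] using hφle
      have h2 : c * T = (K * (1 - δ) - N 0) + c := by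
        rw [hT]
        field_simp
      linarith
    have := hMpos T hTpos.le
    linarith
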